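/- Let R be a ring and T a left denominator set of R such that every element t ∈ T is weakly left regular (i.e., for every S ∈ max.Den_l(R), the image t/1 in S⁻¹R is left regular). Then T ⊆ S for every maximal left denominator set S of R; hence T ⊆ L^s_l(R) = ⋂_{S ∈ max.Den_l(R)} S. -/

import Mathlib

/-- A left Ore set in a ring `R`: a multiplicative subset (`1 ∈ S`, `0 ∉ S`,
closed under multiplication) satisfying the left Ore condition. -/
def IsLeftOreSet (R : Type*) [Ring R] (S : Set R) : Prop :=
  (1 : R) ∈ S ∧ (0 : R) ∉ S ∧ (∀ s ∈ S, ∀ t ∈ S, s * t ∈ S) ∧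
    ∀ (r : R), ∀ s ∈ S, ∃ s' ∈ S, ∃ r' : R, s' * r = r' * s

/-- A left denominator set: a left Ore set such that `r * s = 0` implies
`t * r = 0` for some `t ∈ S`. -/
def IsLeftDenSet (R : Type*) [Ring R] (S : Set R) : Prop :=
  IsLeftOreSet R S ∧ ∀ (r : R), ∀ s ∈ S, r * s = 0 → ∃ t ∈ S, t * r = 0

/-- `ass(S) = {r ∈ R | s r = 0 for some s ∈ S}`. -/
def assSet (R : Type*) [Ring R] (S : Set R) : Set R :=
  {r : R | ∃ s ∈ S, s * r = 0}

/-- A maximal left denominator set of `R`. -/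
def IsMaxLeftDenSet (R : Type*) [Ring R] (S : Set R) : Prop :=
  IsLeftDenSet R S ∧ ∀ T : Set R, IsLeftDenSet R T → S ⊆ T → T = S

/-- The set `L^s_l(R)` of strongly left localizable elements: the intersection of
all maximal left denominator sets of `R`. -/
def stronglyLocalizable (R : Type*) [Ring R] : Set R :=
  {r : R | ∀ S : Set R, IsMaxLeftDenSet R S → r ∈ S}

/-- `T_l(R)`: the union of all left denominator sets contained in `L^s_l(R)`
(the largest strong left denominator set). -/
def Tl (R : Type*) [Ring R] : Set R :=
  ⋃₀ {S : Set R | IsLeftDenSet R S ∧ S ⊆ stronglyLocalizable R}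

/-- The left localization radical `l_R = ⋂_{S ∈ max.Den_l(R)} ass(S)`. -/
def lRad (R : Type*) [Ring R] : Set R :=
  {r : R | ∀ S : Set R, IsMaxLeftDenSet R S → r ∈ assSet R S}

/-- `f : R →+* Q` is a left Ore localization of `R` at `S`: elements of `S` become
units, every element of `Q` is of the form `s⁻¹ r`, and `ker f = ass(S)`. -/
def IsLeftLocalization (R : Type*) [Ring R] {Q : Type*} [Ring Q]
    (S : Set R) (f : R →+* Q) : Prop :=
  (∀ s ∈ S, IsUnit (f s)) ∧
  (∀ q : Q, ∃ s ∈ S, ∃ r : R, ∃ u : Qˣ, (u : Q) = f s ∧ q = (↑u⁻¹ : Q) * f r) ∧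
  (∀ r : R, f r = 0 ↔ r ∈ assSet R S)

/-- Existence of a left Ore localization for any left denominator set,
via Mathlib's `OreLocalization`. -/
theorem exists_loc {R : Type u} [Ring R] (S : Set R) (h : IsLeftDenSet R S) :
    ∃ (Q : Type u) (instQ : Ring Q) (f : R →+* Q), @IsLeftLocalization R _ Q instQ S f := by
  classical
  let S' : Submonoid R :=
    { carrier := S, one_mem' := h.1.1, mul_mem' := fun ha hb => h.1.2.2.1 _ ha _ hb }
  letI : OreLocalization.OreSet S' := Classical.choice <| OreLocalization.nonempty_oreSet_iff.mpr
    ⟨fun r₁ r₂ s hrs => by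
        obtain ⟨t, ht, h0⟩ := h.2 (r₁ - r₂) s s.2 (by rw [sub_mul, hrs, sub_self])
        refine ⟨⟨t, ht⟩, ?_⟩
        have : t * r₁ - t * r₂ = 0 := by rw [← mul_sub, h0]
        exact sub_eq_zero.mp this,
     fun r s => by
        obtain ⟨s', hs', r', he⟩ := h.1.2.2.2 r s s.2
        exact ⟨r', ⟨s', hs'⟩, he⟩⟩
  refine ⟨OreLocalization S' R, inferInstance, OreLocalization.numeratorRingHom, ?_, ?_, ?_⟩
  · intro s hs
    exact OreLocalization.numerator_isUnit (⟨s, hs⟩ : S')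
  · intro q
    induction q using OreLocalization.ind with
    | _ r s =>
      refine ⟨s, s.2, r, OreLocalization.numeratorUnit s, rfl, ?_⟩
      show r /ₒ s = ((1 : R) /ₒ s) * ((r : R) /ₒ 1)
      rw [OreLocalization.one_div_mul, one_mul]
  · intro r
    show r /ₒ (1 : S') = 0 ↔ _
    rw [← OreLocalization.zero_oreDiv' (1 : S'), OreLocalization.oreDiv_eq_iff]
    constructor
    · rintro ⟨u, v, h1, h2⟩
      simp only [Submonoid.coe_one, mul_one] at h2
      refine ⟨u, u.2, ?_⟩
      rw [smul_zero] at h1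
      have hv : v * r = 0 := by simpa [Submonoid.smul_def] using h1.symm
      rw [h2]; exact hv
    · rintro ⟨s, hs, hsr⟩
      exact ⟨⟨s, hs⟩, s, by simpa [Submonoid.smul_def] using hsr.symm, by simp⟩

theorem stmt13.{u} (R : Type u) [Ring R] (T : Set R) (hT : IsLeftDenSet R T)
    (hreg : ∀ t ∈ T, ∀ S : Set R, IsMaxLeftDenSet R S →
      ∀ (Q : Type u) [Ring Q] (f : R →+* Q), IsLeftLocalization R S f →
        ∀ q : Q, q * f t = 0 → q = 0) :
    ∀ S : Set R, IsMaxLeftDenSet R S → T ⊆ S := by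
  intro S hS t ht
  obtain ⟨Q, instQ, f, hf⟩ := exists_loc S hS.1
  have hSden := hS.1
  have hzero : (0 : R) ∉ S := hSden.1.2.1
  have hQ1 : (1 : Q) ≠ 0 := by
    intro h10
    obtain ⟨s, hs, hs0⟩ := (hf.2.2 1).mp (by rw [map_one, h10])
    rw [mul_one] at hs0
    exact hzero (hs0 ▸ hs)
  set M := Submonoid.closure (S ∪ T) with hM
  have key : ∀ l : List R, (∀ y ∈ l, y ∈ S ∪ T) → ∀ q : Q, q * f l.prod = 0 → q = 0 := by
    intro l
    induction l with
    | nil => intro _ q hq; simpa using hq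
    | cons a l ih =>
      intro hmem q hq
      have ha := hmem a List.mem_cons_self
      have hq' : (q * f a) * f l.prod = 0 := by
        rw [List.prod_cons, map_mul] at hq
        rw [mul_assoc]; exact hq
      have h2 : q * f a = 0 := ih (fun y hy => hmem y (List.mem_cons_of_mem a hy)) _ hq'
      rcases ha with ha | ha
      · obtain ⟨u, hu⟩ := hf.1 a ha
        rw [← hu] at h2
        calc q = q * ↑u * ↑u⁻¹ := by rw [mul_assoc, u.mul_inv, mul_one]
          _ = 0 := by rw [h2, zero_mul]
      · exact hreg a ha S hS Q f hf q h2
  have hzeroM : (0 : R) ∉ (M : Set R) := by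
    intro h0
    obtain ⟨l, hl, hlp⟩ := Submonoid.exists_list_of_mem_closure h0
    exact hQ1 (key l hl 1 (by rw [hlp, map_zero, mul_zero]))
  have hOreM : ∀ l : List R, (∀ y ∈ l, y ∈ S ∪ T) → ∀ r : R,
      ∃ p ∈ (M : Set R), ∃ r' : R, p * r = r' * l.prod := by
    intro l
    induction l with
    | nil => exact fun _ r => ⟨1, one_mem M, r, by simp⟩
    | cons a l ih =>
      intro hmem r
      obtain ⟨p, hp, r₁, hpr⟩ := ih (fun y hy => hmem y (List.mem_cons_of_mem a hy)) r
      have ha := hmem a List.mem_cons_self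
      obtain ⟨s₂, hs₂M, r₂, hs₂⟩ : ∃ s₂ ∈ (M : Set R), ∃ r₂, s₂ * r₁ = r₂ * a := by
        rcases ha with ha | ha
        · obtain ⟨s', hs', r', he⟩ := hSden.1.2.2.2 r₁ a ha
          exact ⟨s', Submonoid.subset_closure (Or.inl hs'), r', he⟩
        · obtain ⟨s', hs', r', he⟩ := hT.1.2.2.2 r₁ a ha
          exact ⟨s', Submonoid.subset_closure (Or.inr hs'), r', he⟩
      refine ⟨s₂ * p, mul_mem hs₂M hp, r₂, ?_⟩
      rw [List.prod_cons, mul_assoc, hpr, ← mul_assoc, hs₂, mul_assoc]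
  have hDenM : ∀ l : List R, (∀ y ∈ l, y ∈ S ∪ T) → ∀ r : R,
      r * l.prod = 0 → ∃ p ∈ (M : Set R), p * r = 0 := by
    intro l
    induction l with
    | nil =>
      intro _ r hr
      rw [List.prod_nil, mul_one] at hr
      exact ⟨1, one_mem M, by rw [hr, mul_zero]⟩
    | cons a l ih =>
      intro hmem r hr
      rw [List.prod_cons, ← mul_assoc] at hr
      obtain ⟨p₁, hp₁, hp₁0⟩ := ih (fun y hy => hmem y (List.mem_cons_of_mem a hy)) (r * a) hr
      rw [← mul_assoc] at hp₁0
      have ha := hmem a List.mem_cons_self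
      obtain ⟨b, hbM, hb0⟩ : ∃ b ∈ (M : Set R), b * (p₁ * r) = 0 := by
        rcases ha with ha | ha
        · obtain ⟨b, hb, hb0⟩ := hSden.2 (p₁ * r) a ha hp₁0
          exact ⟨b, Submonoid.subset_closure (Or.inl hb), hb0⟩
        · obtain ⟨b, hb, hb0⟩ := hT.2 (p₁ * r) a ha hp₁0
          exact ⟨b, Submonoid.subset_closure (Or.inr hb), hb0⟩
      exact ⟨b * p₁, mul_mem hbM hp₁, by rw [mul_assoc]; exact hb0⟩
  have hMden : IsLeftDenSet R (M : Set R) := by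
    refine ⟨⟨one_mem M, hzeroM, fun a ha b hb => mul_mem ha hb, ?_⟩, ?_⟩
    · intro r s hs
      obtain ⟨l, hl, hlp⟩ := Submonoid.exists_list_of_mem_closure hs
      obtain ⟨p, hp, r', he⟩ := hOreM l hl r
      exact ⟨p, hp, r', by rw [he, hlp]⟩
    · intro r s hs hrs
      obtain ⟨l, hl, hlp⟩ := Submonoid.exists_list_of_mem_closure hs
      exact hDenM l hl r (by rw [hlp]; exact hrs)
  have hsub : S ⊆ (M : Set R) := fun s hs => Submonoid.subset_closure (Or.inl hs)
  have hMS := hS.2 (M : Set R) hMden hsub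
  exact hMS ▸ Submonoid.subset_closure (Or.inr ht)
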